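/- Let M be a model category, and suppose we have a commutative triangle f : X → Y, p : X → Z, q : Y → Z with q ∘ f = p, where p is a fibration, f is a weak equivalence, and q is a fibration in a left Bousfield localization L_S M of M (same cofibrations, more weak equivalences). Then p is a fibration in L_S M. -/

import Mathlib

open CategoryTheory CategoryTheory.Limits

universe w v u

namespace Paper

variable {C : Type u} [Category.{v} C]

/-- `Δ(I)`: morphisms `f : A ⟶ B` such that there is `h : B ⟶ Z` with `h ∈ I` and `h ∘ f ∈ I`. -/
def Delta (I : MorphismProperty C) : MorphismProperty C :=
  fun _A B f => ∃ (Z : C) (h : B ⟶ Z), I h ∧ I (f ≫ h)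

/-- The class of cobase changes (pushouts) of morphisms in `I`. -/
def Pushouts (I : MorphismProperty C) : MorphismProperty C :=
  fun X Y g => ∃ (A B : C) (f : A ⟶ B) (u : A ⟶ X) (v : B ⟶ Y), I f ∧ IsPushout u f g v

/-- `f` is a retract of `g` in the arrow category. -/
def IsRetractOf {X Y X' Y' : C} (f : X ⟶ Y) (g : X' ⟶ Y') : Prop :=
  ∃ (i : Arrow.mk f ⟶ Arrow.mk g) (r : Arrow.mk g ⟶ Arrow.mk f), i ≫ r = 𝟙 _

/-- Closure of a class of morphisms under retracts. -/
def RetractClosure (I : MorphismProperty C) : MorphismProperty C :=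
  fun _X _Y f => ∃ (X' Y' : C) (g : X' ⟶ Y'), I g ∧ IsRetractOf f g

/-- The class of morphisms with the right lifting property against all of `J`. -/
def RLP (J : MorphismProperty C) : MorphismProperty C :=
  fun _X _Y p => ∀ ⦃A B : C⦄ (i : A ⟶ B), J i → HasLiftingProperty i p

/-- Index types for transfinite compositions: well-ordered, with bottom and top. -/
class ChainIndex (J : Type w) extends LinearOrder J, SuccOrder J, OrderBot J, OrderTop J where
  wf : WellFoundedLT J

attribute [instance] ChainIndex.wf

/-- The inclusion functor `Set.Iio m ⥤ J`. -/
def iioFunctor {J : Type w} [LinearOrder J] (m : J) : Set.Iio m ⥤ J :=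
  Monotone.functor (f := fun x : Set.Iio m => (x : J)) (fun _ _ h => h)

/-- The canonical cocone on the restriction of `F` to `Set.Iio m`, with apex `F.obj m`. -/
def iioCocone {J : Type w} [LinearOrder J] (F : J ⥤ C) (m : J) :
    Cocone (iioFunctor m ⋙ F) where
  pt := F.obj m
  ι :=
    { app := fun j => F.map (homOfLE j.2.le)
      naturality := fun j k g => by
        dsimp [iioFunctor]
        rw [← F.map_comp, Category.comp_id]
        rfl }

/-- `f` is a transfinite composition of a chain of morphisms each lying in `P`. -/
def IsTransfiniteCompositionOfBody (P : MorphismProperty C) {A B : C} (f : A ⟶ B)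
    (J : Type w) [ChainIndex J] : Prop :=
  ∃ (F : J ⥤ C) (e₀ : F.obj ⊥ ≅ A) (e₁ : F.obj ⊤ ≅ B),
    (e₀.inv ≫ F.map (homOfLE bot_le) ≫ e₁.hom = f) ∧
    (∀ j : J, j < ⊤ → P (F.map (homOfLE (Order.le_succ j)))) ∧
    (∀ m : J, Order.IsSuccLimit m → Nonempty (IsColimit (iioCocone F m)))

/-- `f` is a transfinite composition of morphisms from `P`. -/
def IsTransfiniteCompositionOf (P : MorphismProperty C) {A B : C} (f : A ⟶ B) : Prop :=
  ∃ (J : Type w) (inst : ChainIndex J),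
    @IsTransfiniteCompositionOfBody C _ P A B f J inst

/-- `I-cof_reg`: transfinite compositions of cobase changes of morphisms from `I`. -/
def CofReg (I : MorphismProperty C) : MorphismProperty C :=
  fun _X _Y f => IsTransfiniteCompositionOf.{w} (Pushouts I) f

/-- `I-cof`: retracts of morphisms in `I-cof_reg`. -/
def Cof (I : MorphismProperty C) : MorphismProperty C :=
  RetractClosure (CofReg.{w} I)

/-- A model structure on a category `C`. -/
structure ModelStructure (C : Type u) [Category.{v} C] where
  W : MorphismProperty C
  Cofib : MorphismProperty C
  Fib : MorphismProperty C
  w_comp : ∀ {X Y Z : C} (f : X ⟶ Y) (g : Y ⟶ Z), W f → W g → W (f ≫ g)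
  w_cancel_left : ∀ {X Y Z : C} (f : X ⟶ Y) (g : Y ⟶ Z), W f → W (f ≫ g) → W g
  w_cancel_right : ∀ {X Y Z : C} (f : X ⟶ Y) (g : Y ⟶ Z), W g → W (f ≫ g) → W f
  w_retract : ∀ {X Y X' Y' : C} (f : X ⟶ Y) (g : X' ⟶ Y'), W g → IsRetractOf f g → W f
  cof_retract : ∀ {X Y X' Y' : C} (f : X ⟶ Y) (g : X' ⟶ Y'), Cofib g → IsRetractOf f g → Cofib f
  fib_retract : ∀ {X Y X' Y' : C} (f : X ⟶ Y) (g : X' ⟶ Y'), Fib g → IsRetractOf f g → Fib f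
  lift : ∀ {A B X Y : C} (i : A ⟶ B) (p : X ⟶ Y), Cofib i → Fib p → (W i ∨ W p) →
    HasLiftingProperty i p
  fact₁ : ∀ {X Y : C} (f : X ⟶ Y), ∃ (Z : C) (i : X ⟶ Z) (p : Z ⟶ Y),
    Cofib i ∧ W i ∧ Fib p ∧ i ≫ p = f
  fact₂ : ∀ {X Y : C} (f : X ⟶ Y), ∃ (Z : C) (i : X ⟶ Z) (p : Z ⟶ Y),
    Cofib i ∧ Fib p ∧ W p ∧ i ≫ p = f


/-- in a commutative triangle `q ∘ f = p` with `p` a fibration in `M`,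
`f` a weak equivalence in `M` and `q` a fibration in the localization, `p` is a fibration
in the localization. -/
theorem stmt10 {C : Type u} [Category.{v} C] (M L : ModelStructure C)
    (hcof : ∀ ⦃X Y : C⦄ (f : X ⟶ Y), M.Cofib f ↔ L.Cofib f)
    (hW : ∀ ⦃X Y : C⦄ (f : X ⟶ Y), M.W f → L.W f)
    {X Y Z : C} (f : X ⟶ Y) (p : X ⟶ Z) (q : Y ⟶ Z) (hcomm : f ≫ q = p)
    (hp : M.Fib p) (hf : M.W f) (hq : L.Fib q) :
    L.Fib p := by
  -- Factor f = j ≫ r with j an acyclic cofibration and r a fibration in M.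
  obtain ⟨W', j, r, hjcof, hjW, hrfib, hjr⟩ := M.fact₁ f
  have hrW : M.W r := M.w_cancel_left j r hjW (by rw [hjr]; exact hf)
  -- Lift to get a retraction s : W' ⟶ X over Z.
  haveI hlift_jp : HasLiftingProperty j p := M.lift j p hjcof hp (Or.inl hjW)
  have sq1 : CommSq (𝟙 X) j p (r ≫ q) :=
    ⟨by rw [Category.id_comp, ← Category.assoc, hjr, hcomm]⟩
  obtain ⟨s, hs1, hs2⟩ : ∃ s, j ≫ s = 𝟙 X ∧ s ≫ p = r ≫ q := ⟨sq1.lift, sq1.fac_left, sq1.fac_right⟩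
  -- Claim: p has the right lifting property against all L-acyclic L-cofibrations.
  have claim : ∀ ⦃A B : C⦄ (i : A ⟶ B), L.Cofib i → L.W i → HasLiftingProperty i p := by
    intro A B i hicof hiW
    constructor
    intro u v sq
    haveI hlift_iq : HasLiftingProperty i q := L.lift i q hicof hq (Or.inl hiW)
    have sqq : CommSq (u ≫ f) i q v :=
      ⟨by rw [Category.assoc, hcomm, sq.w]⟩
    obtain ⟨t, ht1, ht2⟩ : ∃ t, i ≫ t = u ≫ f ∧ t ≫ q = v := ⟨sqq.lift, sqq.fac_left, sqq.fac_right⟩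
    haveI hlift_ir : HasLiftingProperty i r :=
      M.lift i r ((hcof i).mpr hicof) hrfib (Or.inr hrW)
    have sqr : CommSq (u ≫ j) i r t :=
      ⟨by rw [Category.assoc, hjr, ht1]⟩
    obtain ⟨k, hk1, hk2⟩ : ∃ k, i ≫ k = u ≫ j ∧ k ≫ r = t := ⟨sqr.lift, sqr.fac_left, sqr.fac_right⟩
    exact ⟨⟨⟨k ≫ s,
      by rw [← Category.assoc, hk1, Category.assoc, hs1, Category.comp_id],
      by rw [Category.assoc, hs2, ← Category.assoc, hk2, ht2]⟩⟩⟩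
  -- Retract argument in L.
  obtain ⟨Z', i₂, q₂, hi2cof, hi2W, hq2fib, hfact⟩ := L.fact₁ p
  haveI hlift₂ : HasLiftingProperty i₂ p := claim i₂ hi2cof hi2W
  have sq2 : CommSq (𝟙 X) i₂ p q₂ := ⟨by rw [Category.id_comp, hfact]⟩
  obtain ⟨s₂, hs₂1, hs₂2⟩ : ∃ s₂, i₂ ≫ s₂ = 𝟙 X ∧ s₂ ≫ p = q₂ := ⟨sq2.lift, sq2.fac_left, sq2.fac_right⟩
  refine L.fib_retract p q₂ hq2fib
    ⟨⟨i₂, 𝟙 Z, by simp [hfact]⟩, ⟨s₂, 𝟙 Z, by simp [hs₂2]⟩, ?_⟩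
  refine CommaMorphism.ext ?_ ?_
  · exact hs₂1
  · exact Category.comp_id _

end Paper
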